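/- For all positive integers m and n and every sequence (a_i : i ∈ ℕ) of positive integers, there is a bound N, depending only on m, n, and the sequence, on the length of strictly increasing chains S₀ ⊊ S₁ ⊊ S₂ ⊊ ⋯ of antichains S_k of ℕ^m × Fin n (with the product order), where each S_k ⊆ {(ξ,h) : |ξ| ≤ a_k}. -/

import Mathlib

/-- The height `|σ| = ∑_{i<m} σ(i)` of a multi-index. -/
def height {m : ℕ} (σ : Fin m → ℕ) : ℕ := ∑ i, σ i

/-- The product order on `ℕ^m × Fin n`: `(σ,k) ≤ (τ,ℓ)` iff `σ ≤ τ`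
componentwise and `k = ℓ`. -/
def prodLE {m n : ℕ} (p q : (Fin m → ℕ) × Fin n) : Prop :=
  p.1 ≤ q.1 ∧ p.2 = q.2

namespace BCAux

variable {m n : ℕ}

/-- ℕ^m × Fin n is a well-quasi-order for `prodLE`. -/
lemma wqo_pair (p : ℕ → (Fin m → ℕ) × Fin n) :
    ∃ i j, i < j ∧ prodLE (p i) (p j) := by
  classical
  -- encode the `Fin n` component and its "complement" as extra ℕ coordinates
  set f : ℕ → (Fin (m + 2) → ℕ) := fun i j =>
    if h : (j : ℕ) < m then (p i).1 ⟨j, h⟩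
    else if (j : ℕ) = m then ((p i).2 : ℕ) else n - ((p i).2 : ℕ) with hf
  obtain ⟨i, j, hij, hle⟩ :=
    Set.isPWO_of_wellQuasiOrderedLE (Set.univ : Set (Fin (m + 2) → ℕ))
      (fun k => ⟨f k, Set.mem_univ _⟩)
  refine ⟨i, j, hij, ?_, ?_⟩
  · intro k
    have := hle ⟨(k : ℕ), by omega⟩
    simpa [hf, k.isLt] using this
  · have h1 := hle ⟨m, by omega⟩
    have h2 := hle ⟨m + 1, by omega⟩
    simp only [hf, Nat.lt_irrefl, Nat.succ_ne_self, dif_neg, if_true, if_false,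
      not_false_iff, dite_eq_ite, ite_true, ite_false] at h1 h2
    simp only [dif_neg (by omega : ¬ m + 1 < m)] at h2
    have hi := ((p i).2).isLt
    have hj := ((p j).2).isLt
    exact Fin.ext (by omega)

variable (b : ℕ → ℕ)

/-- A "bad" sequence of length `L`, controlled by `b`. -/
def Bad (p : ℕ → (Fin m → ℕ) × Fin n) (L : ℕ) : Prop :=
  (∀ i < L, height (p i).1 ≤ b i) ∧
    ∀ i j, i < j → j < L → ¬ prodLE (p i) (p j)

lemma Bad.mono {p : ℕ → (Fin m → ℕ) × Fin n} {L L' : ℕ} (h : Bad b p L') (hL : L ≤ L') :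
    Bad b p L :=
  ⟨fun i hi => h.1 i (lt_of_lt_of_le hi hL), fun i j hij hj => h.2 i j hij (lt_of_lt_of_le hj hL)⟩

/-- The first `k` values of `q` extend to bad sequences of every length. -/
def Ext (q : ℕ → (Fin m → ℕ) × Fin n) (k : ℕ) : Prop :=
  ∀ L, ∃ p, Bad b p L ∧ ∀ i < k, p i = q i

lemma ext_congr {q q' : ℕ → (Fin m → ℕ) × Fin n} {k : ℕ}
    (h : ∀ i < k, q i = q' i) (hq : Ext b q k) : Ext b q' k := by
  intro L
  obtain ⟨p, hp, hag⟩ := hq L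
  exact ⟨p, hp, fun i hi => (hag i hi).trans (h i hi)⟩

lemma finite_ball (B : ℕ) :
    ({x : (Fin m → ℕ) × Fin n | height x.1 ≤ B}).Finite := by
  have h1 : ({σ : Fin m → ℕ | height σ ≤ B}).Finite := by
    have : ({σ : Fin m → ℕ | height σ ≤ B}) ⊆
        Set.pi Set.univ (fun _ : Fin m => Set.Iic B) := by
      intro σ hσ i _
      calc σ i ≤ ∑ j, σ j := Finset.single_le_sum (fun j _ => Nat.zero_le _) (Finset.mem_univ i)
        _ ≤ B := hσ
    exact (Set.Finite.pi fun _ => Set.finite_Iic B).subset this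
  have : ({x : (Fin m → ℕ) × Fin n | height x.1 ≤ B}) ⊆
      ({σ : Fin m → ℕ | height σ ≤ B}) ×ˢ (Set.univ : Set (Fin n)) := by
    intro x hx; exact ⟨hx, Set.mem_univ _⟩
  exact ((h1.prod Set.finite_univ).subset this)

/-- König-type step: a prefix that extends to all lengths can be prolonged. -/
lemma ext_step {q : ℕ → (Fin m → ℕ) × Fin n} {k : ℕ} (hq : Ext b q k) :
    ∃ v, Ext b (Function.update q k v) (k + 1) := by
  classical
  by_contra hcon
  push_neg at hcon
  have hch : ∀ v : (Fin m → ℕ) × Fin n, ∃ L, ∀ p, Bad b p L →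
      ∃ i < k + 1, p i ≠ Function.update q k v i := by
    intro v
    have := hcon v
    unfold Ext at this
    push_neg at this
    exact this
  choose g hg using hch
  obtain ⟨M, hM⟩ := ((finite_ball (m := m) (n := n) (b k)).image g).bddAbove
  obtain ⟨p, hp, hag⟩ := hq (max (M + 1) (k + 1))
  set v := p k with hv
  have hvV : v ∈ {x : (Fin m → ℕ) × Fin n | height x.1 ≤ b k} :=
    hp.1 k (lt_of_lt_of_le (Nat.lt_succ_self k) (le_max_right _ _))
  have hgv : g v ≤ M := hM (Set.mem_image_of_mem g hvV)
  obtain ⟨i, hi, hne⟩ := hg v p (hp.mono b (by omega))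
  apply hne
  rcases Nat.lt_or_ge i k with h | h
  · rw [Function.update_of_ne (by omega)]
    exact hag i h
  · have : i = k := by omega
    subst this
    simp [Function.update_self, hv]

end BCAux

namespace BCAux

open scoped Classical

/-- Iteratively chosen approximations to an infinite bad sequence. -/
noncomputable def Q (b : ℕ → ℕ) (m n : ℕ) (hn : 0 < n) : ℕ → ℕ → (Fin m → ℕ) × Fin n
  | 0 => fun _ => (fun _ => 0, ⟨0, hn⟩)
  | (k + 1) =>
    if h : ∃ v, Ext b (Function.update (Q b m n hn k) k v) (k + 1) then
      Function.update (Q b m n hn k) k (Classical.choose h)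
    else Q b m n hn k

lemma Q_ext (b : ℕ → ℕ) (m n : ℕ) (hn : 0 < n) (H : ∀ L, ∃ p : ℕ → (Fin m → ℕ) × Fin n, Bad b p L) :
    ∀ k, Ext b (Q b m n hn k) k := by
  intro k
  induction k with
  | zero =>
    intro L
    obtain ⟨p, hp⟩ := H L
    exact ⟨p, hp, fun i hi => absurd hi (Nat.not_lt_zero i)⟩
  | succ k ih =>
    have hex := ext_step b ih
    rw [show Q b m n hn (k + 1) =
        Function.update (Q b m n hn k) k (Classical.choose hex) from dif_pos hex]
    exact Classical.choose_spec hex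

lemma Q_agree (b : ℕ → ℕ) (m n : ℕ) (hn : 0 < n) :
    ∀ k i, i < k → Q b m n hn k i = Q b m n hn (i + 1) i := by
  intro k
  induction k with
  | zero => intro i hi; omega
  | succ k ih =>
    intro i hi
    rcases Nat.lt_or_ge i k with h | h
    · have hstep : Q b m n hn (k + 1) i = Q b m n hn k i := by
        by_cases hex : ∃ v, Ext b (Function.update (Q b m n hn k) k v) (k + 1)
        · rw [show Q b m n hn (k + 1) =
            Function.update (Q b m n hn k) k (Classical.choose hex) from dif_pos hex,
            Function.update_of_ne (by omega)]
        · rw [show Q b m n hn (k + 1) = Q b m n hn k from dif_neg hex]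
      rw [hstep]; exact ih i h
    · have : i = k := by omega
      subst this; rfl

/-- Any family of bad sequences of all lengths with fixed control is impossible,
so lengths of bad sequences are bounded. -/
lemma bad_bound (b : ℕ → ℕ) (m n : ℕ) (hn : 0 < n) :
    ∃ N : ℕ, ∀ L (p : ℕ → (Fin m → ℕ) × Fin n), Bad b p L → L ≤ N := by
  by_contra hcon
  push_neg at hcon
  have H : ∀ L, ∃ p : ℕ → (Fin m → ℕ) × Fin n, Bad b p L := by
    intro L
    obtain ⟨L', p, hp, hL⟩ := hcon L
    exact ⟨p, hp.mono b hL.le⟩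
  set q : ℕ → (Fin m → ℕ) × Fin n := fun i => Q b m n hn (i + 1) i with hqdef
  have hbad : ∀ i j, i < j → ¬ prodLE (q i) (q j) := by
    intro i j hij
    obtain ⟨p, hp, hag⟩ := Q_ext b m n hn H (j + 1) (j + 1)
    have hqi : q i = p i := by
      rw [hqdef]
      simp only
      rw [← Q_agree b m n hn (j + 1) i (by omega), hag i (by omega)]
    have hqj : q j = p j := by
      rw [hqdef]
      simp only
      rw [← Q_agree b m n hn (j + 1) j (by omega), hag j (by omega)]
    rw [hqi, hqj]
    exact hp.2 i j hij (Nat.lt_succ_self j)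
  obtain ⟨i, j, hij, hle⟩ := wqo_pair q
  exact hbad i j hij hle

end BCAux

/-- For all positive integers `m` and `n` and every sequence of positive
integers `(aᵢ)`, there is a bound `N` (depending only on `m`, `n` and the
sequence) on the length of strictly increasing chains `S₀ ⊊ S₁ ⊊ ⋯` of
antichains `S_k` of `ℕ^m × Fin n` with `S_k ⊆ {(ξ,h) : |ξ| ≤ a_k}`. -/
theorem bounded_chains_of_antichains (m n : ℕ) (hm : 0 < m) (hn : 0 < n)
    (a : ℕ → ℕ) (ha : ∀ i, 0 < a i) :
    ∃ N : ℕ, ∀ (L : ℕ) (S : ℕ → Set ((Fin m → ℕ) × Fin n)),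
      (∀ k < L, S k ⊂ S (k + 1)) →
      (∀ k ≤ L, IsAntichain prodLE (S k)) →
      (∀ k ≤ L, S k ⊆ {p | height p.1 ≤ a k}) →
      L ≤ N := by
  classical
  obtain ⟨N, hN⟩ := BCAux.bad_bound (fun i => a (i + 1)) m n hn
  refine ⟨N, fun L S hchain hanti hsub => ?_⟩
  -- monotonicity of the chain
  have hmono : ∀ j, j ≤ L → ∀ i, i ≤ j → S i ⊆ S j := by
    intro j
    induction j with
    | zero =>
      intro _ i hi
      have : i = 0 := by omega
      subst this; exact subset_rfl
    | succ j ih =>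
      intro hjL i hi
      rcases Nat.lt_or_ge i (j + 1) with h | h
      · exact (ih (by omega) i (by omega)).trans (hchain j (by omega)).subset
      · have : i = j + 1 := by omega
        subst this; exact subset_rfl
  -- pick witnesses of strictness
  have hne : ∀ k, k < L → ((S (k + 1)) \ (S k)).Nonempty := by
    intro k hk
    exact Set.nonempty_of_ssubset (hchain k hk)
  set p : ℕ → (Fin m → ℕ) × Fin n := fun k =>
    if h : ((S (k + 1)) \ (S k)).Nonempty then h.choose else (fun _ => 0, ⟨0, hn⟩) with hpdef
  have hpmem : ∀ k, k < L → p k ∈ (S (k + 1)) \ (S k) := by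
    intro k hk
    have h := hne k hk
    simp only [hpdef, dif_pos h]
    exact h.choose_spec
  refine hN L p ⟨?_, ?_⟩
  · intro i hi
    exact hsub (i + 1) (by omega) (hmono (i + 1) (by omega) (i + 1) le_rfl (hpmem i hi).1)
  · intro i j hij hj
    have hiL : p i ∈ S L := hmono L le_rfl (i + 1) (by omega) (hpmem i (by omega)).1
    have hjL : p j ∈ S L := hmono L le_rfl (j + 1) (by omega) (hpmem j hj).1
    have hne' : p i ≠ p j := by
      intro hEq
      have : p i ∈ S j := hmono j (by omega) (i + 1) (by omega) (hpmem i (by omega)).1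
      rw [hEq] at this
      exact (hpmem j hj).2 this
    exact hanti L le_rfl hiL hjL hne'
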